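/- (ℚ,<) is oligomorphic: for every n ≥ 1, the diagonal action of the group of order automorphisms of ℚ on the set of n-tuples Fin n → ℚ (where α acts by u ↦ α ∘ u) has only finitely many orbits. -/

import Mathlib

noncomputable def stepFun (p p' q : ℚ) : ℚ → ℚ := fun x =>
  if x ≤ p then x + (p' - p) else if x < q then q - (q - x) * (q - p') / (q - p) else x

lemma step (p p' q : ℚ) (hp : p < q) (hp' : p' < q) :
    ∃ f : ℚ ≃o ℚ, f p = p' ∧ ∀ x, q ≤ x → f x = x := by
  have hqp : (0:ℚ) < q - p := by linarith
  have hqp' : (0:ℚ) < q - p' := by linarith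
  have hmono : StrictMono (stepFun p p' q) := by
    intro x y hxy
    unfold stepFun
    rcases le_or_gt x p with hx | hx
    · rcases le_or_gt y p with hy | hy
      · simp only [if_pos hx, if_pos hy]; linarith
      · rcases lt_or_ge y q with hyq | hyq
        · rw [if_pos hx, if_neg (not_le.2 hy), if_pos hyq]
          have h2 : (q - y) * (q - p') / (q - p) < q - p' := by
            rw [div_lt_iff₀ hqp]; nlinarith
          linarith
        · rw [if_pos hx, if_neg (not_le.2 hy), if_neg (not_lt.2 hyq)]
          linarith
    · have hxy' : ¬ y ≤ p := by linarith
      rcases lt_or_ge x q with hxq | hxq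
      · rcases lt_or_ge y q with hyq | hyq
        · rw [if_neg (not_le.2 hx), if_pos hxq, if_neg hxy', if_pos hyq]
          have h3 : (q - y) * (q - p') / (q - p) < (q - x) * (q - p') / (q - p) := by
            apply div_lt_div_of_pos_right ?_ hqp
            nlinarith
          linarith
        · rw [if_neg (not_le.2 hx), if_pos hxq, if_neg hxy', if_neg (not_lt.2 hyq)]
          have h4 : 0 < (q - x) * (q - p') / (q - p) :=
            div_pos (mul_pos (by linarith) hqp') hqp
          linarith
      · rw [if_neg (not_le.2 hx), if_neg (not_lt.2 hxq), if_neg hxy',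
          if_neg (not_lt.2 (by linarith))]
        exact hxy
  have hsurj : Function.Surjective (stepFun p p' q) := by
    intro y
    unfold stepFun
    rcases le_or_gt y p' with hy | hy
    · exact ⟨y + p - p', by rw [if_pos (by linarith)]; ring⟩
    · rcases lt_or_ge y q with hyq | hyq
      · refine ⟨q - (q - y) * (q - p) / (q - p'), ?_⟩
        have h5 : (q - y) * (q - p) / (q - p') < q - p := by
          rw [div_lt_iff₀ hqp']; nlinarith
        have h6 : 0 < (q - y) * (q - p) / (q - p') :=
          div_pos (mul_pos (by linarith) hqp) hqp'
        rw [if_neg (by push_neg; linarith), if_pos (by linarith)]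
        field_simp
        ring
      · exact ⟨y, by rw [if_neg (by push_neg; linarith), if_neg (not_lt.2 hyq)]⟩
  refine ⟨StrictMono.orderIsoOfSurjective _ hmono hsurj, ?_, ?_⟩
  · show stepFun p p' q p = p'
    unfold stepFun; rw [if_pos le_rfl]; ring
  · intro x hx
    show stepFun p p' q x = x
    unfold stepFun
    rw [if_neg (by push_neg; linarith), if_neg (not_lt.2 hx)]

lemma extend (k : ℕ) : ∀ (a b : Fin k → ℚ), StrictMono a → StrictMono b →
    ∀ q : ℚ, (∀ i, a i < q) → (∀ i, b i < q) →
    ∃ f : ℚ ≃o ℚ, (∀ i, f (a i) = b i) ∧ ∀ x, q ≤ x → f x = x := by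
  induction k with
  | zero => exact fun a b _ _ q _ _ => ⟨OrderIso.refl ℚ, fun i => i.elim0, fun x _ => rfl⟩
  | succ k ih =>
    intro a b ha hb q haq hbq
    obtain ⟨f₁, hf₁p, hf₁fix⟩ := step (a (Fin.last k)) (b (Fin.last k)) q (haq _) (hbq _)
    obtain ⟨f₂, hf₂, hf₂fix⟩ := ih (fun i => f₁ (a i.castSucc)) (fun i => b i.castSucc)
      (fun i j hij => f₁.strictMono (ha (by simpa using hij)))
      (fun i j hij => hb (by simpa using hij))
      (b (Fin.last k))
      (fun i => by
        have := f₁.strictMono (ha (Fin.castSucc_lt_last i))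
        rwa [hf₁p] at this)
      (fun i => hb (Fin.castSucc_lt_last i))
    refine ⟨f₁.trans f₂, ?_, ?_⟩
    · intro i
      refine Fin.lastCases ?_ (fun j => ?_) i
      · show f₂ (f₁ (a (Fin.last k))) = b (Fin.last k)
        rw [hf₁p]; exact hf₂fix _ le_rfl
      · exact hf₂ j
    · intro x hx
      show f₂ (f₁ x) = x
      rw [hf₁fix x hx]
      exact hf₂fix x (le_trans (le_of_lt (hbq _)) hx)

lemma homog {n : ℕ} (u v : Fin n → ℚ) (h : ∀ i j, u i ≤ u j ↔ v i ≤ v j) :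
    ∃ α : ℚ ≃o ℚ, ∀ i, α (u i) = v i := by
  classical
  have h_eq : ∀ i j, u i = u j → v i = v j := fun i j hij =>
    le_antisymm ((h i j).1 hij.le) ((h j i).1 hij.ge)
  have h_lt : ∀ i j, u i < u j → v i < v j := fun i j hij =>
    lt_of_le_not_ge ((h i j).1 hij.le) (fun hc => absurd ((h j i).2 hc) (not_le.2 hij))
  set s : Finset ℚ := Finset.image u Finset.univ with hs
  set e : Fin s.card ≃o s := s.orderIsoOfFin rfl with he
  set a : Fin s.card → ℚ := fun m => (e m : ℚ) with ha'
  have ha : StrictMono a := fun m m' hm => e.strictMono hm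
  have hmem : ∀ m, ∃ i, u i = a m := by
    intro m
    have : (a m) ∈ s := (e m).2
    rw [hs, Finset.mem_image] at this
    obtain ⟨i, _, hi⟩ := this
    exact ⟨i, hi⟩
  set ψ : ℚ → ℚ := fun x => if hx : ∃ i, u i = x then v hx.choose else 0 with hψ
  have hψu : ∀ i, ψ (u i) = v i := by
    intro i
    have hx : ∃ j, u j = u i := ⟨i, rfl⟩
    simp only [hψ, dif_pos hx]
    exact h_eq _ _ hx.choose_spec
  set b : Fin s.card → ℚ := fun m => ψ (a m) with hb'
  have hb : StrictMono b := by
    intro m m' hm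
    obtain ⟨i, hi⟩ := hmem m
    obtain ⟨j, hj⟩ := hmem m'
    have : u i < u j := by rw [hi, hj]; exact ha hm
    simp only [hb', ← hi, ← hj, hψu]
    exact h_lt _ _ this
  set q : ℚ := 1 + (∑ m, |a m|) + (∑ m, |b m|) with hq
  have hbound : ∀ (c : Fin s.card → ℚ), (∀ m, c m < 1 + (∑ m, |a m|) + (∑ m, |b m|)) ∨ True := fun _ => Or.inr trivial
  have haq : ∀ m, a m < q := by
    intro m
    have h1 : a m ≤ |a m| := le_abs_self _
    have h2 : |a m| ≤ ∑ m', |a m'| :=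
      Finset.single_le_sum (fun i _ => abs_nonneg (a i)) (Finset.mem_univ m)
    have h3 : (0:ℚ) ≤ ∑ m', |b m'| := Finset.sum_nonneg fun i _ => abs_nonneg _
    rw [hq]; linarith
  have hbq : ∀ m, b m < q := by
    intro m
    have h1 : b m ≤ |b m| := le_abs_self _
    have h2 : |b m| ≤ ∑ m', |b m'| :=
      Finset.single_le_sum (fun i _ => abs_nonneg (b i)) (Finset.mem_univ m)
    have h3 : (0:ℚ) ≤ ∑ m', |a m'| := Finset.sum_nonneg fun i _ => abs_nonneg _
    rw [hq]; linarith
  obtain ⟨f, hf, -⟩ := extend s.card a b ha hb q haq hbq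
  refine ⟨f, fun i => ?_⟩
  have hmem' : u i ∈ s := by rw [hs]; exact Finset.mem_image_of_mem u (Finset.mem_univ i)
  have : a (e.symm ⟨u i, hmem'⟩) = u i := by
    simp only [ha']
    rw [e.apply_symm_apply]
  calc f (u i) = f (a (e.symm ⟨u i, hmem'⟩)) := by rw [this]
    _ = b (e.symm ⟨u i, hmem'⟩) := hf _
    _ = ψ (u i) := by show ψ (a _) = ψ (u i); rw [this]
    _ = v i := hψu i

theorem rat_order_oligomorphic (n : ℕ) (hn : 1 ≤ n) :
    Set.Finite {O : Set (Fin n → ℚ) |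
      ∃ u : Fin n → ℚ, O = {v | ∃ α : ℚ ≃o ℚ, ∀ i, α (u i) = v i}} := by
  apply Set.Finite.subset (Set.finite_range
    (fun P : Fin n → Fin n → Prop => {v : Fin n → ℚ | ∀ i j, v i ≤ v j ↔ P i j}))
  rintro O ⟨u, rfl⟩
  refine ⟨fun i j => u i ≤ u j, ?_⟩
  ext v
  simp only [Set.mem_setOf_eq]
  constructor
  · intro hv
    exact homog u v (fun i j => (hv i j).symm)
  · rintro ⟨α, hα⟩ i j
    rw [← hα i, ← hα j]
    exact α.le_iff_le
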